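/- The group B_2(C_4) is isomorphic to Z, generated by β_1 = [1,2], with [1,1] = [0,1] = 2β_1, [1,3] = 0, [2,3] = -β_1, and [3,3] = [0,3] = -2β_1. -/

import Mathlib

open FreeAbelianGroup

/-- A multiset of characters generates the character group. -/
def Adm {A : Type} [AddCommGroup A] (s : Multiset A) : Prop :=
  AddSubgroup.closure {x | x ∈ s} = ⊤

/-- Admissible symbols: multisets of `n` characters generating `A`. -/
def Symb (A : Type) [AddCommGroup A] (n : ℕ) : Type :=
  {s : Multiset A // Multiset.card s = n ∧ Adm s}

/-- The blow-up relations (B₂). -/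
def blowupRels (A : Type) [AddCommGroup A] (n : ℕ) :
    Set (FreeAbelianGroup (Symb A n)) :=
  {x | ∃ (a b : A) (t : Multiset A)
      (h : Multiset.card (a ::ₘ b ::ₘ t) = n ∧ Adm (a ::ₘ b ::ₘ t))
      (h1 : Multiset.card (a ::ₘ (b - a) ::ₘ t) = n ∧ Adm (a ::ₘ (b - a) ::ₘ t))
      (h2 : Multiset.card ((a - b) ::ₘ b ::ₘ t) = n ∧ Adm ((a - b) ::ₘ b ::ₘ t)),
      a ≠ b ∧
      x = of (⟨a ::ₘ b ::ₘ t, h⟩ : Symb A n) - of ⟨a ::ₘ (b - a) ::ₘ t, h1⟩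
            - of ⟨(a - b) ::ₘ b ::ₘ t, h2⟩} ∪
  {x | ∃ (a : A) (t : Multiset A)
      (h : Multiset.card (a ::ₘ a ::ₘ t) = n ∧ Adm (a ::ₘ a ::ₘ t))
      (h0 : Multiset.card ((0 : A) ::ₘ a ::ₘ t) = n ∧ Adm ((0 : A) ::ₘ a ::ₘ t)),
      x = of (⟨a ::ₘ a ::ₘ t, h⟩ : Symb A n) - of ⟨(0 : A) ::ₘ a ::ₘ t, h0⟩}

/-- The group of equivariant birational types `𝓑ₙ(G)`, for `A = G^∨`. -/
def B (A : Type) [AddCommGroup A] (n : ℕ) : Type :=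
  FreeAbelianGroup (Symb A n) ⧸ AddSubgroup.closure (blowupRels A n)

instance (A : Type) [AddCommGroup A] (n : ℕ) : AddCommGroup (B A n) := by
  unfold B; infer_instance

/-- The class of a symbol in `𝓑ₙ(G)`. -/
def symb {A : Type} [AddCommGroup A] {n : ℕ} (s : Multiset A)
    (h : Multiset.card s = n ∧ Adm s) : B A n :=
  QuotientAddGroup.mk (of (⟨s, h⟩ : Symb A n))

lemma adm_of_unit {N : ℕ} [NeZero N] {s : Multiset (ZMod N)} {u : ZMod N}
    (hu : u ∈ s) (h : IsUnit u) : Adm s := by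
  rw [Adm, AddSubgroup.eq_top_iff']
  intro x
  have hu' : u ∈ AddSubgroup.closure {y | y ∈ s} := AddSubgroup.subset_closure hu
  obtain ⟨v, hv⟩ := h.exists_left_inv
  have hx : x = (x * v).val • u := by
    rw [nsmul_eq_mul, ZMod.natCast_val, ZMod.cast_id, mul_assoc, hv, mul_one]
  rw [hx]
  exact AddSubgroup.nsmul_mem _ hu' _

lemma admU {N : ℕ} [NeZero N] {s : Multiset (ZMod N)} {u v : ZMod N}
    (hu : u ∈ s) (huv : u * v = 1) : Adm s :=
  adm_of_unit hu ⟨⟨u, v, huv, by rw [mul_comm]; exact huv⟩, rfl⟩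

def c4_12 : B (ZMod 4) 2 :=
  symb {1, 2} ⟨by decide, admU (u := 1) (v := 1) (by decide) (by decide)⟩
def c4_11 : B (ZMod 4) 2 :=
  symb {1, 1} ⟨by decide, admU (u := 1) (v := 1) (by decide) (by decide)⟩
def c4_01 : B (ZMod 4) 2 :=
  symb {0, 1} ⟨by decide, admU (u := 1) (v := 1) (by decide) (by decide)⟩
def c4_13 : B (ZMod 4) 2 :=
  symb {1, 3} ⟨by decide, admU (u := 1) (v := 1) (by decide) (by decide)⟩
def c4_23 : B (ZMod 4) 2 :=
  symb {2, 3} ⟨by decide, admU (u := 3) (v := 3) (by decide) (by decide)⟩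
def c4_33 : B (ZMod 4) 2 :=
  symb {3, 3} ⟨by decide, admU (u := 3) (v := 3) (by decide) (by decide)⟩
def c4_03 : B (ZMod 4) 2 :=
  symb {0, 3} ⟨by decide, admU (u := 3) (v := 3) (by decide) (by decide)⟩


section Aux

def gB2C4 (m : Multiset (ZMod 4)) : ℤ :=
  if m = {1, 2} then 1
  else if m = {1, 1} then 2
  else if m = {0, 1} then 2
  else if m = {2, 3} then -1
  else if m = {3, 3} then -2
  else if m = {0, 3} then -2
  else 0

lemma gB2C4_blowup : ∀ a b : ZMod 4, a ≠ b →
    gB2C4 (a ::ₘ b ::ₘ 0) - gB2C4 (a ::ₘ (b - a) ::ₘ 0) - gB2C4 ((a - b) ::ₘ b ::ₘ 0) = 0 := by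
  decide

lemma gB2C4_double : ∀ a : ZMod 4,
    gB2C4 (a ::ₘ a ::ₘ 0) = gB2C4 ((0:ZMod 4) ::ₘ a ::ₘ 0) := by decide

lemma card_two_t_eq {a b : ZMod 4} {t : Multiset (ZMod 4)}
    (h : Multiset.card (a ::ₘ b ::ₘ t) = 2) : t = 0 := by
  simp [Multiset.card_cons] at h
  exact h

def phi0B2C4 : FreeAbelianGroup (Symb (ZMod 4) 2) →+ ℤ :=
  FreeAbelianGroup.lift (fun s => gB2C4 s.val)

lemma phi0B2C4_of (s : Symb (ZMod 4) 2) : phi0B2C4 (of s) = gB2C4 s.val :=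
  FreeAbelianGroup.lift_apply_of _ s

lemma relsB2C4_ker : ∀ x ∈ blowupRels (ZMod 4) 2, phi0B2C4 x = 0 := by
  rintro x (⟨a, b, t, h, h1, h2, hab, rfl⟩ | ⟨a, t, h, h0, rfl⟩)
  · obtain rfl : t = 0 := card_two_t_eq h.1
    show phi0B2C4 (@of (Symb (ZMod 4) 2) ⟨_, h⟩ - @of (Symb (ZMod 4) 2) ⟨_, h1⟩
      - @of (Symb (ZMod 4) 2) ⟨_, h2⟩) = 0
    simp only [map_sub, phi0B2C4_of]
    rw [phi0B2C4_of ⟨_, h⟩, phi0B2C4_of ⟨_, h1⟩, phi0B2C4_of ⟨_, h2⟩]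
    exact gB2C4_blowup a b hab
  · obtain rfl : t = 0 := card_two_t_eq h.1
    show phi0B2C4 (@of (Symb (ZMod 4) 2) ⟨_, h⟩ - @of (Symb (ZMod 4) 2) ⟨_, h0⟩) = 0
    simp only [map_sub, phi0B2C4_of]
    rw [sub_eq_zero, phi0B2C4_of ⟨_, h⟩, phi0B2C4_of ⟨_, h0⟩]
    exact gB2C4_double a

def phibarB2C4 : B (ZMod 4) 2 →+ ℤ :=
  QuotientAddGroup.lift _ phi0B2C4
    (fun x hx => (AddSubgroup.closure_le _).mpr
      (fun y hy => AddMonoidHom.mem_ker.mpr (relsB2C4_ker y hy)) hx)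

lemma phibarB2C4_symb (s : Multiset (ZMod 4)) (h : Multiset.card s = 2 ∧ Adm s) :
    phibarB2C4 (symb s h) = gB2C4 s := by
  show phi0B2C4 (of ⟨s, h⟩) = gB2C4 s
  exact phi0B2C4_of ⟨s, h⟩

lemma symb_congr {s s' : Multiset (ZMod 4)} (e : s = s')
    (h : Multiset.card s = 2 ∧ Adm s) (h' : Multiset.card s' = 2 ∧ Adm s') :
    symb s h = symb s' h' := by subst e; rfl

lemma symb_rel1 (a b : ZMod 4) (hab : a ≠ b)
    (h : Multiset.card (a ::ₘ b ::ₘ 0) = 2 ∧ Adm (a ::ₘ b ::ₘ 0))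
    (h1 : Multiset.card (a ::ₘ (b - a) ::ₘ 0) = 2 ∧ Adm (a ::ₘ (b - a) ::ₘ 0))
    (h2 : Multiset.card ((a - b) ::ₘ b ::ₘ 0) = 2 ∧ Adm ((a - b) ::ₘ b ::ₘ 0)) :
    symb (a ::ₘ b ::ₘ 0) h = symb (a ::ₘ (b - a) ::ₘ 0) h1 + symb ((a - b) ::ₘ b ::ₘ 0) h2 := by
  have hmem : (of (⟨a ::ₘ b ::ₘ 0, h⟩ : Symb (ZMod 4) 2) - of ⟨a ::ₘ (b - a) ::ₘ 0, h1⟩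
      - of ⟨(a - b) ::ₘ b ::ₘ 0, h2⟩) ∈ AddSubgroup.closure (blowupRels (ZMod 4) 2) :=
    AddSubgroup.subset_closure (Or.inl ⟨a, b, 0, h, h1, h2, hab, rfl⟩)
  show QuotientAddGroup.mk _ = QuotientAddGroup.mk _ + QuotientAddGroup.mk _
  exact (QuotientAddGroup.eq_iff_sub_mem (N := AddSubgroup.closure (blowupRels (ZMod 4) 2))).mpr
    (by rw [sub_add_eq_sub_sub]; exact hmem)

lemma symb_rel2 (a : ZMod 4)
    (h : Multiset.card (a ::ₘ a ::ₘ 0) = 2 ∧ Adm (a ::ₘ a ::ₘ 0))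
    (h0 : Multiset.card ((0:ZMod 4) ::ₘ a ::ₘ 0) = 2 ∧ Adm ((0:ZMod 4) ::ₘ a ::ₘ 0)) :
    symb (a ::ₘ a ::ₘ 0) h = symb ((0:ZMod 4) ::ₘ a ::ₘ 0) h0 := by
  have hmem : (of (⟨a ::ₘ a ::ₘ 0, h⟩ : Symb (ZMod 4) 2) - of ⟨(0:ZMod 4) ::ₘ a ::ₘ 0, h0⟩)
      ∈ AddSubgroup.closure (blowupRels (ZMod 4) 2) :=
    AddSubgroup.subset_closure (Or.inr ⟨a, 0, h, h0, rfl⟩)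
  show QuotientAddGroup.mk _ = QuotientAddGroup.mk _
  rw [QuotientAddGroup.eq_iff_sub_mem]
  exact hmem

lemma mkpf {s : Multiset (ZMod 4)} (h1 : Multiset.card s = 2)
    (h2 : (1:ZMod 4) ∈ s ∨ (3:ZMod 4) ∈ s) : Multiset.card s = 2 ∧ Adm s :=
  ⟨h1, h2.elim (fun h => admU (v := 1) h (by decide)) (fun h => admU (v := 3) h (by decide))⟩

lemma not_adm_02 {m : Multiset (ZMod 4)} (hm : ∀ x ∈ m, x = 0 ∨ x = 2) : ¬ Adm m := by
  intro hadm
  have hle : AddSubgroup.closure {x | x ∈ m} ≤ AddSubgroup.zmultiples (2 : ZMod 4) := by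
    apply (AddSubgroup.closure_le _).mpr
    intro x hx
    rcases hm x hx with h | h <;> subst h
    · exact zero_mem _
    · exact AddSubgroup.mem_zmultiples 2
  rw [Adm] at hadm
  rw [hadm] at hle
  have h1 : (1 : ZMod 4) ∈ AddSubgroup.zmultiples (2 : ZMod 4) := hle trivial
  obtain ⟨n, hn⟩ := AddSubgroup.mem_zmultiples_iff.mp h1
  rw [zsmul_eq_mul] at hn
  exact (by decide : ∀ c : ZMod 4, ¬ c * 2 = 1) _ hn

end Aux


section Aux2

lemma zmod4_cases : ∀ x : ZMod 4, x = 0 ∨ x = 1 ∨ x = 2 ∨ x = 3 := by decide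

lemma symb_val (s : Multiset (ZMod 4)) (h : Multiset.card s = 2 ∧ Adm s) :
    (QuotientAddGroup.mk (of (⟨s, h⟩ : Symb (ZMod 4) 2)) : B (ZMod 4) 2) = symb s h := rfl

lemma rel_r1 : c4_01 = c4_01 + c4_13 := by
  have r := symb_rel1 (0:ZMod 4) 1 (by decide)
    (mkpf (by decide) (by decide)) (mkpf (by decide) (by decide)) (mkpf (by decide) (by decide))
  rw [symb_congr (show ((0:ZMod 4) ::ₘ (1-0) ::ₘ 0) = ((0:ZMod 4) ::ₘ 1 ::ₘ 0) from by decide)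
        _ (mkpf (by decide) (by decide)),
      symb_congr (show (((0:ZMod 4)-1) ::ₘ 1 ::ₘ 0) = ((1:ZMod 4) ::ₘ 3 ::ₘ 0) from by decide)
        _ (mkpf (by decide) (by decide))] at r
  exact r

lemma rel_r2 : c4_12 = c4_11 + c4_23 := by
  have r := symb_rel1 (1:ZMod 4) 2 (by decide)
    (mkpf (by decide) (by decide)) (mkpf (by decide) (by decide)) (mkpf (by decide) (by decide))
  rw [symb_congr (show ((1:ZMod 4) ::ₘ (2-1) ::ₘ 0) = ((1:ZMod 4) ::ₘ 1 ::ₘ 0) from by decide)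
        _ (mkpf (by decide) (by decide)),
      symb_congr (show (((1:ZMod 4)-2) ::ₘ 2 ::ₘ 0) = ((2:ZMod 4) ::ₘ 3 ::ₘ 0) from by decide)
        _ (mkpf (by decide) (by decide))] at r
  exact r

lemma rel_r3 : c4_13 = c4_12 + c4_23 := by
  have r := symb_rel1 (1:ZMod 4) 3 (by decide)
    (mkpf (by decide) (by decide)) (mkpf (by decide) (by decide)) (mkpf (by decide) (by decide))
  rw [symb_congr (show ((1:ZMod 4) ::ₘ (3-1) ::ₘ 0) = ((1:ZMod 4) ::ₘ 2 ::ₘ 0) from by decide)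
        _ (mkpf (by decide) (by decide)),
      symb_congr (show (((1:ZMod 4)-3) ::ₘ 3 ::ₘ 0) = ((2:ZMod 4) ::ₘ 3 ::ₘ 0) from by decide)
        _ (mkpf (by decide) (by decide))] at r
  exact r

lemma rel_r4 : c4_23 = c4_12 + c4_33 := by
  have r := symb_rel1 (2:ZMod 4) 3 (by decide)
    (mkpf (by decide) (by decide)) (mkpf (by decide) (by decide)) (mkpf (by decide) (by decide))
  rw [symb_congr (show ((2:ZMod 4) ::ₘ (3-2) ::ₘ 0) = ((1:ZMod 4) ::ₘ 2 ::ₘ 0) from by decide)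
        _ (mkpf (by decide) (by decide)),
      symb_congr (show (((2:ZMod 4)-3) ::ₘ 3 ::ₘ 0) = ((3:ZMod 4) ::ₘ 3 ::ₘ 0) from by decide)
        _ (mkpf (by decide) (by decide))] at r
  exact r

lemma rel_r5 : c4_11 = c4_01 :=
  symb_rel2 (1:ZMod 4) (mkpf (by decide) (by decide)) (mkpf (by decide) (by decide))

lemma rel_r6 : c4_33 = c4_03 :=
  symb_rel2 (3:ZMod 4) (mkpf (by decide) (by decide)) (mkpf (by decide) (by decide))

lemma e13 : c4_13 = 0 := add_eq_left.mp rel_r1.symm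

lemma e23 : c4_23 = -c4_12 := by
  have h := rel_r3
  rw [e13] at h
  exact eq_neg_of_add_eq_zero_left (by rw [add_comm]; exact h.symm)

lemma e11 : c4_11 = 2 • c4_12 := by
  have h := rel_r2
  rw [e23, eq_add_neg_iff_add_eq] at h
  rw [two_smul]
  exact h.symm

lemma e01 : c4_01 = 2 • c4_12 := rel_r5.symm.trans e11

lemma e33 : c4_33 = -(2 • c4_12) := by
  have h := rel_r4
  rw [e23] at h
  have h2 : c4_33 = -c4_12 - c4_12 := by
    rw [eq_sub_iff_add_eq, add_comm]
    exact h.symm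
  rw [h2, two_smul, neg_add, sub_eq_add_neg]

lemma e03 : c4_03 = -(2 • c4_12) := rel_r6.symm.trans e33

lemma smul_eq_symb (s : Multiset (ZMod 4)) (hs : Multiset.card s = 2 ∧ Adm s) :
    gB2C4 s • c4_12 = symb s hs := by
  obtain ⟨a, b, rfl⟩ := Multiset.card_eq_two.mp hs.1
  rcases zmod4_cases a with rfl | rfl | rfl | rfl <;>
    rcases zmod4_cases b with rfl | rfl | rfl | rfl
  · exact absurd hs.2 (not_adm_02 (by decide))
  · rw [show gB2C4 {0,1} = 2 from by decide, two_smul, ← two_smul ℕ, ← e01]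
    rfl
  · exact absurd hs.2 (not_adm_02 (by decide))
  · rw [show gB2C4 {0,3} = -2 from by decide,
      symb_congr (rfl : ({0,3} : Multiset (ZMod 4)) = {0,3}) hs (mkpf (by decide) (by decide))]
    rw [show ((-2 : ℤ) • c4_12) = -(2 • c4_12) from by
      rw [neg_smul, two_smul, ← two_smul ℕ], ← e03]
    rfl
  · rw [symb_congr (show ({1,0} : Multiset (ZMod 4)) = {0,1} from by decide) hs
      (mkpf (by decide) (by decide)),
      show gB2C4 {1,0} = 2 from by decide, two_smul, ← two_smul ℕ, ← e01]
    rfl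
  · rw [show gB2C4 {1,1} = 2 from by decide, two_smul, ← two_smul ℕ, ← e11]
    rfl
  · rw [show gB2C4 {1,2} = 1 from by decide, one_smul]
    rfl
  · rw [show gB2C4 {1,3} = 0 from by decide, zero_smul]
    exact e13.symm
  · exact absurd hs.2 (not_adm_02 (by decide))
  · rw [symb_congr (show ({2,1} : Multiset (ZMod 4)) = {1,2} from by decide) hs
      (mkpf (by decide) (by decide)),
      show gB2C4 {2,1} = 1 from by decide, one_smul]
    rfl
  · exact absurd hs.2 (not_adm_02 (by decide))
  · rw [show gB2C4 {2,3} = -1 from by decide, neg_smul, one_smul, ← e23]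
    rfl
  · rw [symb_congr (show ({3,0} : Multiset (ZMod 4)) = {0,3} from by decide) hs
      (mkpf (by decide) (by decide)),
      show gB2C4 {3,0} = -2 from by decide]
    rw [show ((-2 : ℤ) • c4_12) = -(2 • c4_12) from by
      rw [neg_smul, two_smul, ← two_smul ℕ], ← e03]
    rfl
  · rw [symb_congr (show ({3,1} : Multiset (ZMod 4)) = {1,3} from by decide) hs
      (mkpf (by decide) (by decide)),
      show gB2C4 {3,1} = 0 from by decide, zero_smul]
    exact e13.symm
  · rw [symb_congr (show ({3,2} : Multiset (ZMod 4)) = {2,3} from by decide) hs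
      (mkpf (by decide) (by decide)),
      show gB2C4 {3,2} = -1 from by decide, neg_smul, one_smul, ← e23]
    rfl
  · rw [show gB2C4 {3,3} = -2 from by decide]
    rw [show ((-2 : ℤ) • c4_12) = -(2 • c4_12) from by
      rw [neg_smul, two_smul, ← two_smul ℕ], ← e33]
    rfl

lemma smul_symb_gen : ∀ x : FreeAbelianGroup (Symb (ZMod 4) 2),
    phibarB2C4 (QuotientAddGroup.mk x) • c4_12 = QuotientAddGroup.mk x := by
  intro x
  refine FreeAbelianGroup.induction_on x ?_ ?_ ?_ ?_
  · show phibarB2C4 (QuotientAddGroup.mk 0) • c4_12 = QuotientAddGroup.mk 0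
    exact (by rw [map_zero, zero_smul] : phibarB2C4 (0 : B (ZMod 4) 2) • c4_12 = 0)
  · intro s
    show phibarB2C4 (symb s.1 s.2) • c4_12 = symb s.1 s.2
    rw [phibarB2C4_symb]
    exact smul_eq_symb s.1 s.2
  · intro y hy
    show phibarB2C4 (QuotientAddGroup.mk (-(of y))) • c4_12 = QuotientAddGroup.mk (-(of y))
    exact (fun (u : B (ZMod 4) 2) (hu : phibarB2C4 u • c4_12 = u) =>
      (by rw [map_neg, neg_smul, hu] : phibarB2C4 (-u) • c4_12 = -u)) _ hy
  · intro y z hy hz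
    show phibarB2C4 (QuotientAddGroup.mk (y + z)) • c4_12 = QuotientAddGroup.mk (y + z)
    exact (fun (u v : B (ZMod 4) 2) (hu : phibarB2C4 u • c4_12 = u) (hv : phibarB2C4 v • c4_12 = v) =>
      (by rw [map_add, add_smul, hu, hv] : phibarB2C4 (u + v) • c4_12 = u + v)) _ _ hy hz

lemma phibar_c4_12 : phibarB2C4 c4_12 = 1 :=
  (phibarB2C4_symb {1,2} (mkpf (by decide) (by decide))).trans (by decide)

def phiEquivB2C4 : B (ZMod 4) 2 ≃+ ℤ where
  toFun := phibarB2C4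
  invFun := fun n => n • c4_12
  left_inv := fun x => by
    obtain ⟨y, rfl⟩ := QuotientAddGroup.mk_surjective x
    exact smul_symb_gen y
  right_inv := fun n => by
    rw [map_zsmul, phibar_c4_12, smul_eq_mul, mul_one]
  map_add' := map_add phibarB2C4

end Aux2

/-- `B₂(C₄) ≅ ℤ`, generated by `β₁ = [1,2]`, with
`[1,1] = [0,1] = 2β₁`, `[1,3] = 0`, `[2,3] = -β₁` and `[3,3] = [0,3] = -2β₁`. -/
theorem B2_C4_int :
    (∃ φ : B (ZMod 4) 2 ≃+ ℤ, φ c4_12 = 1) ∧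
    c4_11 = 2 • c4_12 ∧ c4_01 = 2 • c4_12 ∧ c4_13 = 0 ∧
    c4_23 = -c4_12 ∧ c4_33 = -(2 • c4_12) ∧ c4_03 = -(2 • c4_12) := by
  refine ⟨⟨phiEquivB2C4, phibar_c4_12⟩, e11, e01, e13, e23, e33, e03⟩
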